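/- Let H₀, H₁ ∈ B(𝓗) be self-adjoint, let ε > 0 and η > 0, and let g be a switching function. Set H(t) := H₀ + ε·g(η·t)·H₁ and assume spectrum of H(t) is contained in [1,∞) for every t ∈ ℝ. Then for every t ∈ ℝ the map s ↦ √H(s) is differentiable at t in operator norm, with derivative equal to (2·ε·η·g′(η·t)/π) · ∫_{(0,∞)} x²·(x²·1 + H(t))⁻¹·H₁·(x²·1 + H(t))⁻¹ dx, where the integral is a Bochner integral in B(𝓗) of a norm-integrable function. -/

import Mathlib

open MeasureTheory
set_option synthInstance.maxHeartbeats 1000000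
set_option maxHeartbeats 1000000

variable {𝓗 : Type*} [NormedAddCommGroup 𝓗] [InnerProductSpace ℂ 𝓗] [CompleteSpace 𝓗]

namespace HelperStmt14

open Set Filter Topology

set_option linter.unusedSectionVars false

lemma scalar_integral (r : ℝ) (hr : 1 ≤ r) :
    ∫ x in Set.Ioi (0:ℝ), r / (x ^ 2 + r) = Real.pi / 2 * Real.sqrt r := by
  have hr0 : (0:ℝ) < r := lt_of_lt_of_le one_pos hr
  have hsr : (0:ℝ) < Real.sqrt r := Real.sqrt_pos.mpr hr0
  set f : ℝ → ℝ := fun x => Real.sqrt r * Real.arctan (x / Real.sqrt r) with hf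
  have hderiv : ∀ x ∈ Set.Ioi (0:ℝ), HasDerivAt f (r / (x ^ 2 + r)) x := by
    intro x hx
    have h1 : HasDerivAt (fun x : ℝ => x / Real.sqrt r) (1 / Real.sqrt r) x := by
      simpa using (hasDerivAt_id x).div_const (Real.sqrt r)
    have h2 := (Real.hasDerivAt_arctan (x / Real.sqrt r)).comp x h1
    have h3 := h2.const_mul (Real.sqrt r)
    refine h3.congr_deriv ?_
    have hsq : Real.sqrt r ^ 2 = r := Real.sq_sqrt hr0.le
    field_simp
    rw [hsq]
    ring
  have hint : IntegrableOn (fun x => r / (x ^ 2 + r)) (Set.Ioi (0:ℝ)) := by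
    have : Integrable (fun x : ℝ => r * (1 + x ^ 2)⁻¹) := integrable_inv_one_add_sq.const_mul r
    have hcont : Continuous (fun x : ℝ => r / (x ^ 2 + r)) :=
      continuous_const.div (by fun_prop) (fun x => by positivity)
    apply (this.integrableOn).mono' hcont.aestronglyMeasurable.restrict
    filter_upwards with x
    rw [Real.norm_eq_abs, abs_of_nonneg (by positivity), div_eq_mul_inv]
    exact mul_le_mul_of_nonneg_left (inv_anti₀ (by positivity) (by linarith)) hr0.le
  have htend : Tendsto f atTop (𝓝 (Real.sqrt r * (Real.pi / 2))) := by
    apply Tendsto.const_mul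
    exact (Real.tendsto_arctan_atTop.mono_right nhdsWithin_le_nhds).comp
      (tendsto_id.atTop_div_const hsr)
  have hcont : ContinuousWithinAt f (Set.Ici 0) 0 :=
    (continuous_const.mul (Real.continuous_arctan.comp (continuous_id.div_const _))).continuousWithinAt
  have := MeasureTheory.integral_Ioi_of_hasDerivAt_of_tendsto hcont hderiv hint htend
  rw [this, hf]
  simp [Real.arctan_zero, mul_comm]

lemma cont_on_inv (a : 𝓗 →L[ℂ] 𝓗) (hs : spectrum ℝ a ⊆ Set.Ici 1) (x : ℝ) :
    ContinuousOn (fun r : ℝ => (x ^ 2 + r)⁻¹) (spectrum ℝ a) := by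
  apply ContinuousOn.inv₀ (by fun_prop)
  intro r hr
  have : (1:ℝ) ≤ r := hs hr
  positivity

lemma cfc_shift (a : 𝓗 →L[ℂ] 𝓗) (ha : IsSelfAdjoint a) (x : ℝ) :
    cfc (fun r : ℝ => x ^ 2 + r) a = x ^ 2 • (1 : 𝓗 →L[ℂ] 𝓗) + a := by
  have : (fun r : ℝ => x ^ 2 + r) = (fun r : ℝ => x ^ 2 + id r) := rfl
  rw [this, cfc_const_add (x ^ 2) (id : ℝ → ℝ) a, cfc_id ℝ a, Algebra.algebraMap_eq_smul_one]

lemma my_inv_mul_eq_one (a : 𝓗 →L[ℂ] 𝓗) (ha : IsSelfAdjoint a) (hs : spectrum ℝ a ⊆ Set.Ici 1)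
    (x : ℝ) :
    cfc (fun r : ℝ => (x ^ 2 + r)⁻¹) a * (x ^ 2 • (1 : 𝓗 →L[ℂ] 𝓗) + a) = 1 ∧
      (x ^ 2 • (1 : 𝓗 →L[ℂ] 𝓗) + a) * cfc (fun r : ℝ => (x ^ 2 + r)⁻¹) a = 1 := by
  have key : ∀ r ∈ spectrum ℝ a, (x ^ 2 + r) ≠ 0 := fun r hr => by
    have : (1:ℝ) ≤ r := hs hr; positivity
  constructor
  · rw [← cfc_shift a ha x, ← cfc_mul _ _ a (cont_on_inv a hs x) (by fun_prop)]
    rw [← cfc_one ℝ a]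
    exact cfc_congr fun r hr => inv_mul_cancel₀ (key r hr)
  · rw [← cfc_shift a ha x, ← cfc_mul _ _ a (by fun_prop) (cont_on_inv a hs x)]
    rw [← cfc_one ℝ a]
    exact cfc_congr fun r hr => mul_inv_cancel₀ (key r hr)

lemma ringInverse_eq_cfc (a : 𝓗 →L[ℂ] 𝓗) (ha : IsSelfAdjoint a) (hs : spectrum ℝ a ⊆ Set.Ici 1)
    (x : ℝ) :
    Ring.inverse (x ^ 2 • (1 : 𝓗 →L[ℂ] 𝓗) + a) = cfc (fun r : ℝ => (x ^ 2 + r)⁻¹) a := by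
  obtain ⟨h1, h2⟩ := my_inv_mul_eq_one a ha hs x
  let u : (𝓗 →L[ℂ] 𝓗)ˣ := ⟨x ^ 2 • (1 : 𝓗 →L[ℂ] 𝓗) + a, cfc (fun r : ℝ => (x ^ 2 + r)⁻¹) a, h2, h1⟩
  exact Ring.inverse_unit u

lemma isUnit_shift (a : 𝓗 →L[ℂ] 𝓗) (ha : IsSelfAdjoint a) (hs : spectrum ℝ a ⊆ Set.Ici 1)
    (x : ℝ) : IsUnit (x ^ 2 • (1 : 𝓗 →L[ℂ] 𝓗) + a) := by
  obtain ⟨h1, h2⟩ := my_inv_mul_eq_one a ha hs x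
  exact ⟨⟨x ^ 2 • (1 : 𝓗 →L[ℂ] 𝓗) + a, cfc (fun r : ℝ => (x ^ 2 + r)⁻¹) a, h2, h1⟩, rfl⟩

lemma norm_ringInverse_le (a : 𝓗 →L[ℂ] 𝓗) (ha : IsSelfAdjoint a) (hs : spectrum ℝ a ⊆ Set.Ici 1)
    (x : ℝ) : ‖Ring.inverse (x ^ 2 • (1 : 𝓗 →L[ℂ] 𝓗) + a)‖ ≤ (1 + x ^ 2)⁻¹ := by
  rw [ringInverse_eq_cfc a ha hs x]
  apply norm_cfc_le (by positivity)
  intro r hr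
  have h1 : (1:ℝ) ≤ r := hs hr
  rw [Real.norm_eq_abs, abs_of_nonneg (by positivity)]
  apply inv_anti₀ (by positivity)
  linarith

-- resolvent identity
lemma resolvent_diff (a b : 𝓗 →L[ℂ] 𝓗) (ha : IsSelfAdjoint a) (hb : IsSelfAdjoint b)
    (hsa : spectrum ℝ a ⊆ Set.Ici 1) (hsb : spectrum ℝ b ⊆ Set.Ici 1) (x : ℝ) :
    Ring.inverse (x ^ 2 • (1 : 𝓗 →L[ℂ] 𝓗) + a) - Ring.inverse (x ^ 2 • (1 : 𝓗 →L[ℂ] 𝓗) + b)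
      = Ring.inverse (x ^ 2 • (1 : 𝓗 →L[ℂ] 𝓗) + a) * (b - a) *
          Ring.inverse (x ^ 2 • (1 : 𝓗 →L[ℂ] 𝓗) + b) := by
  set Ra := Ring.inverse (x ^ 2 • (1 : 𝓗 →L[ℂ] 𝓗) + a)
  set Rb := Ring.inverse (x ^ 2 • (1 : 𝓗 →L[ℂ] 𝓗) + b)
  have h1 : (x ^ 2 • (1 : 𝓗 →L[ℂ] 𝓗) + b) * Rb = 1 :=
    Ring.mul_inverse_cancel _ (isUnit_shift b hb hsb x)
  have h2 : Ra * (x ^ 2 • (1 : 𝓗 →L[ℂ] 𝓗) + a) = 1 :=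
    Ring.inverse_mul_cancel _ (isUnit_shift a ha hsa x)
  have : b - a = (x ^ 2 • (1 : 𝓗 →L[ℂ] 𝓗) + b) - (x ^ 2 • (1 : 𝓗 →L[ℂ] 𝓗) + a) := by abel
  rw [this, mul_sub, sub_mul, mul_assoc Ra _ Rb, h1, mul_one, h2, one_mul]



section WithNontrivial

variable [Nontrivial 𝓗]

lemma cont_on_div (a : 𝓗 →L[ℂ] 𝓗) (hs : spectrum ℝ a ⊆ Set.Ici 1) (x : ℝ) :
    ContinuousOn (fun r : ℝ => r / (x ^ 2 + r)) (spectrum ℝ a) := by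
  apply ContinuousOn.div continuousOn_id (by fun_prop)
  intro r hr
  have : (1:ℝ) ≤ r := hs hr
  positivity

lemma one_sub_smul_eq_cfc (a : 𝓗 →L[ℂ] 𝓗) (ha : IsSelfAdjoint a)
    (hs : spectrum ℝ a ⊆ Set.Ici 1) (x : ℝ) :
    1 - x ^ 2 • Ring.inverse (x ^ 2 • (1 : 𝓗 →L[ℂ] 𝓗) + a)
      = cfc (fun r : ℝ => r / (x ^ 2 + r)) a := by
  have hcont : ContinuousOn (fun r : ℝ => (x ^ 2 + r)⁻¹) (spectrum ℝ a) := by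
    apply ContinuousOn.inv₀ (by fun_prop)
    intro r hr; have : (1:ℝ) ≤ r := hs hr; positivity
  symm
  calc cfc (fun r : ℝ => r / (x ^ 2 + r)) a
      = cfc (fun r : ℝ => (fun _ : ℝ => (1:ℝ)) r - (fun r : ℝ => x ^ 2 • (x ^ 2 + r)⁻¹) r) a := by
        apply cfc_congr
        intro r hr
        have h1 : (1:ℝ) ≤ r := hs hr
        have : x ^ 2 + r ≠ 0 := by positivity
        simp only [smul_eq_mul]
        field_simp
        ring
    _ = cfc (fun _ : ℝ => (1:ℝ)) a - cfc (fun r : ℝ => x ^ 2 • (x ^ 2 + r)⁻¹) a :=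
        cfc_sub _ _ a continuousOn_const (hcont.const_smul (x ^ 2))
    _ = 1 - x ^ 2 • Ring.inverse (x ^ 2 • (1 : 𝓗 →L[ℂ] 𝓗) + a) := by
        rw [cfc_const_one ℝ a, cfc_smul (x ^ 2) _ a hcont, ringInverse_eq_cfc a ha hs x]

lemma norm_one_sub_smul_le (a : 𝓗 →L[ℂ] 𝓗) (ha : IsSelfAdjoint a)
    (hs : spectrum ℝ a ⊆ Set.Ici 1) (x : ℝ) :
    ‖1 - x ^ 2 • Ring.inverse (x ^ 2 • (1 : 𝓗 →L[ℂ] 𝓗) + a)‖ ≤ ‖a‖ * (1 + x ^ 2)⁻¹ := by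
  rw [one_sub_smul_eq_cfc a ha hs x]
  apply norm_cfc_le (by positivity)
  intro r hr
  have h1 : (1:ℝ) ≤ r := hs hr
  have h2 : ‖r‖ ≤ ‖a‖ := spectrum.norm_le_norm_of_mem hr
  rw [Real.norm_eq_abs] at h2 ⊢
  rw [abs_of_nonneg (by positivity), ← div_eq_mul_inv,
    div_le_div_iff₀ (by positivity) (by positivity)]
  have h3 : r ≤ ‖a‖ := le_trans (le_abs_self r) h2
  nlinarith [sq_nonneg x, mul_le_mul_of_nonneg_right h3 (sq_nonneg x)]

lemma sqrt_eq_cfc_real (a : 𝓗 →L[ℂ] 𝓗) (ha : IsSelfAdjoint a)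
    (hs : spectrum ℝ a ⊆ Set.Ici 1) : CFC.sqrt a = cfc Real.sqrt a := by
  have hpos : (0 : 𝓗 →L[ℂ] 𝓗) ≤ a := by
    rw [nonneg_iff_isSelfAdjoint_and_quasispectrumRestricts]
    exact ⟨ha, SpectrumRestricts.nnreal_iff.mpr fun x hx => le_trans zero_le_one (hs hx)⟩
  rw [CFC.sqrt_eq_cfc, cfc_nnreal_eq_real _ a hpos]
  apply cfc_congr
  intro x hx
  have hx0 : (0:ℝ) ≤ x := le_trans zero_le_one (hs hx)
  simp only [Real.coe_sqrt, Real.coe_toNNReal x hx0]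

lemma sqrt_rep (a : 𝓗 →L[ℂ] 𝓗) (ha : IsSelfAdjoint a) (hs : spectrum ℝ a ⊆ Set.Ici 1) :
    CFC.sqrt a = (2 / Real.pi) •
      ∫ x in Set.Ioi (0:ℝ), (1 - x ^ 2 • Ring.inverse (x ^ 2 • (1 : 𝓗 →L[ℂ] 𝓗) + a)) := by
  have key := cfc_integral (μ := volume.restrict (Set.Ioi (0:ℝ)))
      (fun x r => r / (x ^ 2 + r)) (fun x => ‖a‖ * (1 + x ^ 2)⁻¹) a
      ?hf ?hbound ?hfin ha
  case hf =>
    apply ContinuousOn.div (by fun_prop) (by fun_prop)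
    rintro ⟨x, r⟩ ⟨-, hr⟩
    have : (1:ℝ) ≤ r := hs hr
    dsimp only [Function.uncurry]
    positivity
  case hbound =>
    refine .of_forall ?_
    intro x z hz
    have h1 : (1:ℝ) ≤ z := hs hz
    have h3 : z ≤ ‖a‖ := le_trans (le_abs_self z) (spectrum.norm_le_norm_of_mem hz)
    rw [Real.norm_eq_abs, abs_of_nonneg (by positivity), ← div_eq_mul_inv,
      div_le_div_iff₀ (by positivity) (by positivity)]
    nlinarith [sq_nonneg x, mul_le_mul_of_nonneg_right h3 (sq_nonneg x)]
  case hfin =>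
    exact ((integrable_inv_one_add_sq.const_mul ‖a‖).restrict).hasFiniteIntegral
  -- key : cfc (fun r => ∫ x in Ioi 0, r/(x^2+r)) a = ∫ x in Ioi 0, cfc (fun r => r/(x^2+r)) a
  have lhs_eq : cfc (fun r : ℝ => ∫ x in Set.Ioi (0:ℝ), r / (x ^ 2 + r)) a
      = (Real.pi / 2) • cfc Real.sqrt a := by
    rw [← cfc_const_mul (Real.pi / 2) Real.sqrt a Real.continuous_sqrt.continuousOn]
    apply cfc_congr
    intro r hr
    exact scalar_integral r (hs hr)
  have rhs_eq : (∫ x in Set.Ioi (0:ℝ), cfc (fun r : ℝ => r / (x ^ 2 + r)) a)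
      = ∫ x in Set.Ioi (0:ℝ), (1 - x ^ 2 • Ring.inverse (x ^ 2 • (1 : 𝓗 →L[ℂ] 𝓗) + a)) := by
    refine integral_congr_ae (.of_forall fun x => ?_)
    dsimp only
    exact (one_sub_smul_eq_cfc a ha hs x).symm
  beta_reduce at key
  rw [lhs_eq, rhs_eq] at key
  rw [sqrt_eq_cfc_real a ha hs, ← key, smul_smul]
  have hpi : (2 / Real.pi) * (Real.pi / 2) = 1 := by
    field_simp
  rw [hpi, one_smul]

lemma cont_ringInverse (a : 𝓗 →L[ℂ] 𝓗) (ha : IsSelfAdjoint a)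
    (hs : spectrum ℝ a ⊆ Set.Ici 1) :
    Continuous (fun x : ℝ => Ring.inverse (x ^ 2 • (1 : 𝓗 →L[ℂ] 𝓗) + a)) := by
  rw [continuous_iff_continuousAt]
  intro x
  obtain ⟨u, hu⟩ := isUnit_shift a ha hs x
  have h1 : ContinuousAt Ring.inverse ((u : 𝓗 →L[ℂ] 𝓗)) := NormedRing.inverse_continuousAt u
  rw [hu] at h1
  have h2 : Continuous fun y : ℝ => y ^ 2 • (1 : 𝓗 →L[ℂ] 𝓗) + a := by fun_prop
  exact ContinuousAt.comp (x := x) (g := Ring.inverse)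
    (f := fun y : ℝ => y ^ 2 • (1 : 𝓗 →L[ℂ] 𝓗) + a) h1 h2.continuousAt

lemma integrable_triple (a b T : 𝓗 →L[ℂ] 𝓗) (ha : IsSelfAdjoint a) (hb : IsSelfAdjoint b)
    (hsa : spectrum ℝ a ⊆ Set.Ici 1) (hsb : spectrum ℝ b ⊆ Set.Ici 1) :
    IntegrableOn (fun x : ℝ => x ^ 2 •
      (Ring.inverse (x ^ 2 • (1 : 𝓗 →L[ℂ] 𝓗) + a) * T *
        Ring.inverse (x ^ 2 • (1 : 𝓗 →L[ℂ] 𝓗) + b))) (Set.Ioi 0) := by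
  have hcont : Continuous (fun x : ℝ => x ^ 2 •
      (Ring.inverse (x ^ 2 • (1 : 𝓗 →L[ℂ] 𝓗) + a) * T *
        Ring.inverse (x ^ 2 • (1 : 𝓗 →L[ℂ] 𝓗) + b))) := by
    exact (continuous_pow 2).smul
      (((cont_ringInverse a ha hsa).mul continuous_const).mul (cont_ringInverse b hb hsb))
  apply ((integrable_inv_one_add_sq.const_mul ‖T‖).restrict).mono'
    hcont.aestronglyMeasurable.restrict
  filter_upwards with x
  have h1 := norm_ringInverse_le a ha hsa x
  have h2 := norm_ringInverse_le b hb hsb x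
  have hu : (0:ℝ) < 1 + x ^ 2 := by positivity
  calc ‖x ^ 2 • (Ring.inverse (x ^ 2 • (1 : 𝓗 →L[ℂ] 𝓗) + a) * T *
        Ring.inverse (x ^ 2 • (1 : 𝓗 →L[ℂ] 𝓗) + b))‖
      ≤ x ^ 2 * ((1 + x ^ 2)⁻¹ * ‖T‖ * (1 + x ^ 2)⁻¹) := by
        rw [norm_smul, Real.norm_eq_abs, abs_of_nonneg (sq_nonneg x)]
        gcongr
        exact le_trans (norm_mul_le _ _)
          (mul_le_mul (le_trans (norm_mul_le _ _)
            (mul_le_mul h1 le_rfl (norm_nonneg _) (by positivity))) h2 (norm_nonneg _)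
            (by positivity))
    _ ≤ ‖T‖ * (1 + x ^ 2)⁻¹ := by
        have hx1 : x ^ 2 * (1 + x ^ 2)⁻¹ ≤ 1 := by
          rw [← div_eq_mul_inv, div_le_one hu]; linarith
        calc x ^ 2 * ((1 + x ^ 2)⁻¹ * ‖T‖ * (1 + x ^ 2)⁻¹)
            = (x ^ 2 * (1 + x ^ 2)⁻¹) * (‖T‖ * (1 + x ^ 2)⁻¹) := by ring
          _ ≤ 1 * (‖T‖ * (1 + x ^ 2)⁻¹) := by
              apply mul_le_mul_of_nonneg_right hx1 (by positivity)
          _ = ‖T‖ * (1 + x ^ 2)⁻¹ := one_mul _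

lemma integrable_one_sub (a : 𝓗 →L[ℂ] 𝓗) (ha : IsSelfAdjoint a)
    (hs : spectrum ℝ a ⊆ Set.Ici 1)
    (hb : ∀ x : ℝ, ‖1 - x ^ 2 • Ring.inverse (x ^ 2 • (1 : 𝓗 →L[ℂ] 𝓗) + a)‖
      ≤ ‖a‖ * (1 + x ^ 2)⁻¹) :
    IntegrableOn (fun x : ℝ => 1 - x ^ 2 • Ring.inverse (x ^ 2 • (1 : 𝓗 →L[ℂ] 𝓗) + a))
      (Set.Ioi 0) := by
  have hcont : Continuous (fun x : ℝ =>
      1 - x ^ 2 • Ring.inverse (x ^ 2 • (1 : 𝓗 →L[ℂ] 𝓗) + a)) :=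
    continuous_const.sub ((continuous_pow 2).smul (cont_ringInverse a ha hs))
  apply ((integrable_inv_one_add_sq.const_mul ‖a‖).restrict).mono'
    hcont.aestronglyMeasurable.restrict
  filter_upwards with x using hb x

theorem stmt_main (H₀ H₁ : 𝓗 →L[ℂ] 𝓗) (hH₀ : IsSelfAdjoint H₀) (hH₁ : IsSelfAdjoint H₁)
    (ε η : ℝ) (hε : 0 < ε) (hη : 0 < η)
    (g : ℝ → ℝ) (hg : ContDiff ℝ 1 g) (hg0 : ∀ s ≤ (0 : ℝ), g s = 0)
    (hg' : ∀ s ∉ Set.Ioo (0 : ℝ) 1, deriv g s = 0)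
    (H : ℝ → 𝓗 →L[ℂ] 𝓗) (hH : ∀ t, H t = H₀ + (ε * g (η * t)) • H₁)
    (hspec : ∀ t, spectrum ℝ (H t) ⊆ Set.Ici 1) :
    ∀ t : ℝ,
      IntegrableOn
        (fun x : ℝ => x ^ 2 •
          (Ring.inverse (x ^ 2 • (1 : 𝓗 →L[ℂ] 𝓗) + H t) * H₁ *
            Ring.inverse (x ^ 2 • (1 : 𝓗 →L[ℂ] 𝓗) + H t))) (Set.Ioi 0) ∧
      HasDerivAt (fun s => CFC.sqrt (H s))
        ((2 * ε * η * deriv g (η * t) / Real.pi) •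
          ∫ x in Set.Ioi (0 : ℝ),
            x ^ 2 • (Ring.inverse (x ^ 2 • (1 : 𝓗 →L[ℂ] 𝓗) + H t) * H₁ *
              Ring.inverse (x ^ 2 • (1 : 𝓗 →L[ℂ] 𝓗) + H t))) t := by
  intro t
  have hsa : ∀ s, IsSelfAdjoint (H s) := by
    intro s
    rw [hH s]
    apply hH₀.add
    rw [RCLike.real_smul_eq_coe_smul (K := ℂ) (ε * g (η * s)) H₁]
    show star _ = _
    rw [star_smul, hH₁.star_eq]
    norm_num
  set c : ℝ → ℝ := fun s => ε * g (η * s) with hc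
  have hdiffH : ∀ s u : ℝ, H s - H u = (c s - c u) • H₁ := by
    intro s u
    rw [hH s, hH u, sub_smul]
    abel
  have hRd : ∀ s u x : ℝ, Ring.inverse (x ^ 2 • (1 : 𝓗 →L[ℂ] 𝓗) + H s)
      - Ring.inverse (x ^ 2 • (1 : 𝓗 →L[ℂ] 𝓗) + H u)
      = (c u - c s) • (Ring.inverse (x ^ 2 • (1 : 𝓗 →L[ℂ] 𝓗) + H s) * H₁ *
          Ring.inverse (x ^ 2 • (1 : 𝓗 →L[ℂ] 𝓗) + H u)) := by
    intro s u x
    rw [resolvent_diff (H s) (H u) (hsa s) (hsa u) (hspec s) (hspec u) x, hdiffH u s,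
      mul_smul_comm, smul_mul_assoc]
  have h3 : ∀ s u, IntegrableOn (fun x : ℝ => x ^ 2 •
      (Ring.inverse (x ^ 2 • (1 : 𝓗 →L[ℂ] 𝓗) + H s) * H₁ *
        Ring.inverse (x ^ 2 • (1 : 𝓗 →L[ℂ] 𝓗) + H u))) (Set.Ioi 0) := fun s u =>
    integrable_triple (H s) (H u) H₁ (hsa s) (hsa u) (hspec s) (hspec u)
  have h1 : ∀ s, IntegrableOn
      (fun x : ℝ => 1 - x ^ 2 • Ring.inverse (x ^ 2 • (1 : 𝓗 →L[ℂ] 𝓗) + H s))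
      (Set.Ioi 0) := fun s =>
    integrable_one_sub (H s) (hsa s) (hspec s) (norm_one_sub_smul_le (H s) (hsa s) (hspec s))
  refine ⟨h3 t t, ?_⟩
  set F : ℝ → 𝓗 →L[ℂ] 𝓗 :=
    fun s => ∫ x in Set.Ioi (0:ℝ), (1 - x ^ 2 • Ring.inverse (x ^ 2 • (1 : 𝓗 →L[ℂ] 𝓗) + H s))
    with hF
  set G : ℝ → 𝓗 →L[ℂ] 𝓗 :=
    fun s => ∫ x in Set.Ioi (0:ℝ), x ^ 2 • (Ring.inverse (x ^ 2 • (1 : 𝓗 →L[ℂ] 𝓗) + H t) * H₁ *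
      Ring.inverse (x ^ 2 • (1 : 𝓗 →L[ℂ] 𝓗) + H s)) with hG
  have hsqrt : ∀ s, CFC.sqrt (H s) = (2 / Real.pi) • F s := fun s =>
    sqrt_rep (H s) (hsa s) (hspec s)
  have E1 : ∀ s, F s - F t = (c s - c t) • G s := by
    intro s
    have e0 : ∀ x : ℝ, (1 - x ^ 2 • Ring.inverse (x ^ 2 • (1 : 𝓗 →L[ℂ] 𝓗) + H s))
        - (1 - x ^ 2 • Ring.inverse (x ^ 2 • (1 : 𝓗 →L[ℂ] 𝓗) + H t))
        = (c s - c t) • (x ^ 2 • (Ring.inverse (x ^ 2 • (1 : 𝓗 →L[ℂ] 𝓗) + H t) * H₁ *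
            Ring.inverse (x ^ 2 • (1 : 𝓗 →L[ℂ] 𝓗) + H s))) := by
      intro x
      rw [sub_sub_sub_cancel_left, ← smul_sub, hRd t s x, smul_comm]
    calc F s - F t
        = ∫ x in Set.Ioi (0:ℝ),
            ((1 - x ^ 2 • Ring.inverse (x ^ 2 • (1 : 𝓗 →L[ℂ] 𝓗) + H s))
              - (1 - x ^ 2 • Ring.inverse (x ^ 2 • (1 : 𝓗 →L[ℂ] 𝓗) + H t))) :=
          (integral_sub (h1 s) (h1 t)).symm
      _ = ∫ x in Set.Ioi (0:ℝ), (c s - c t) •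
            (x ^ 2 • (Ring.inverse (x ^ 2 • (1 : 𝓗 →L[ℂ] 𝓗) + H t) * H₁ *
              Ring.inverse (x ^ 2 • (1 : 𝓗 →L[ℂ] 𝓗) + H s))) := by
          exact integral_congr_ae (.of_forall e0)
      _ = (c s - c t) • G s := integral_smul _ _
  set I : ℝ := ∫ x in Set.Ioi (0:ℝ), (1 + x ^ 2)⁻¹ with hI
  have E2 : ∀ s, ‖G s - G t‖ ≤ |c s - c t| * ‖H₁‖ ^ 2 * I := by
    intro s
    have hpt : ∀ x : ℝ,
        ‖(x ^ 2 • (Ring.inverse (x ^ 2 • (1 : 𝓗 →L[ℂ] 𝓗) + H t) * H₁ *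
            Ring.inverse (x ^ 2 • (1 : 𝓗 →L[ℂ] 𝓗) + H s)))
          - (x ^ 2 • (Ring.inverse (x ^ 2 • (1 : 𝓗 →L[ℂ] 𝓗) + H t) * H₁ *
            Ring.inverse (x ^ 2 • (1 : 𝓗 →L[ℂ] 𝓗) + H t)))‖
          ≤ |c s - c t| * ‖H₁‖ ^ 2 * (1 + x ^ 2)⁻¹ := by
      intro x
      have hu : (0:ℝ) < 1 + x ^ 2 := by positivity
      have hu1 : (1 + x ^ 2)⁻¹ ≤ 1 := by
        have := inv_anti₀ one_pos (by nlinarith [sq_nonneg x] : (1:ℝ) ≤ 1 + x ^ 2)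
        simpa using this
      have hx1 : x ^ 2 * (1 + x ^ 2)⁻¹ ≤ 1 := by
        rw [← div_eq_mul_inv, div_le_one hu]; linarith
      have hRs := norm_ringInverse_le (H s) (hsa s) (hspec s) x
      have hRt := norm_ringInverse_le (H t) (hsa t) (hspec t) x
      have hdn : ‖Ring.inverse (x ^ 2 • (1 : 𝓗 →L[ℂ] 𝓗) + H s)
          - Ring.inverse (x ^ 2 • (1 : 𝓗 →L[ℂ] 𝓗) + H t)‖
          ≤ |c t - c s| * ((1 + x ^ 2)⁻¹ * ‖H₁‖ * (1 + x ^ 2)⁻¹) := by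
        rw [hRd s t x, norm_smul, Real.norm_eq_abs]
        gcongr
        exact le_trans (norm_mul_le _ _) (by gcongr; exact le_trans (norm_mul_le _ _) (by gcongr))
      calc ‖(x ^ 2 • (Ring.inverse (x ^ 2 • (1 : 𝓗 →L[ℂ] 𝓗) + H t) * H₁ *
            Ring.inverse (x ^ 2 • (1 : 𝓗 →L[ℂ] 𝓗) + H s)))
          - (x ^ 2 • (Ring.inverse (x ^ 2 • (1 : 𝓗 →L[ℂ] 𝓗) + H t) * H₁ *
            Ring.inverse (x ^ 2 • (1 : 𝓗 →L[ℂ] 𝓗) + H t)))‖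
          = ‖x ^ 2 • ((Ring.inverse (x ^ 2 • (1 : 𝓗 →L[ℂ] 𝓗) + H t) * H₁) *
              (Ring.inverse (x ^ 2 • (1 : 𝓗 →L[ℂ] 𝓗) + H s)
                - Ring.inverse (x ^ 2 • (1 : 𝓗 →L[ℂ] 𝓗) + H t)))‖ := by
            rw [← smul_sub, ← mul_sub]
        _ ≤ x ^ 2 * (((1 + x ^ 2)⁻¹ * ‖H₁‖) *
              (|c t - c s| * ((1 + x ^ 2)⁻¹ * ‖H₁‖ * (1 + x ^ 2)⁻¹))) := by
            rw [norm_smul, Real.norm_eq_abs, abs_of_nonneg (sq_nonneg x)]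
            gcongr
            exact le_trans (norm_mul_le _ _)
              (by gcongr; exact le_trans (norm_mul_le _ _) (by gcongr))
        _ ≤ |c s - c t| * ‖H₁‖ ^ 2 * (1 + x ^ 2)⁻¹ := by
            rw [abs_sub_comm (c t) (c s)]
            have expand : x ^ 2 * (((1 + x ^ 2)⁻¹ * ‖H₁‖) *
                (|c s - c t| * ((1 + x ^ 2)⁻¹ * ‖H₁‖ * (1 + x ^ 2)⁻¹)))
                = (|c s - c t| * ‖H₁‖ ^ 2 * (1 + x ^ 2)⁻¹) *
                  ((x ^ 2 * (1 + x ^ 2)⁻¹) * (1 + x ^ 2)⁻¹) := by ring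
            rw [expand]
            have : (x ^ 2 * (1 + x ^ 2)⁻¹) * (1 + x ^ 2)⁻¹ ≤ 1 :=
              mul_le_one₀ hx1 (by positivity) hu1
            calc (|c s - c t| * ‖H₁‖ ^ 2 * (1 + x ^ 2)⁻¹) *
                  ((x ^ 2 * (1 + x ^ 2)⁻¹) * (1 + x ^ 2)⁻¹)
                ≤ (|c s - c t| * ‖H₁‖ ^ 2 * (1 + x ^ 2)⁻¹) * 1 :=
                  mul_le_mul_of_nonneg_left this (by positivity)
              _ = |c s - c t| * ‖H₁‖ ^ 2 * (1 + x ^ 2)⁻¹ := mul_one _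
    have hGsub : G s - G t = ∫ x in Set.Ioi (0:ℝ),
        ((x ^ 2 • (Ring.inverse (x ^ 2 • (1 : 𝓗 →L[ℂ] 𝓗) + H t) * H₁ *
            Ring.inverse (x ^ 2 • (1 : 𝓗 →L[ℂ] 𝓗) + H s)))
          - (x ^ 2 • (Ring.inverse (x ^ 2 • (1 : 𝓗 →L[ℂ] 𝓗) + H t) * H₁ *
            Ring.inverse (x ^ 2 • (1 : 𝓗 →L[ℂ] 𝓗) + H t)))) :=
      (integral_sub (h3 t s) (h3 t t)).symm
    rw [hGsub]
    have hmaj : Integrable (fun x : ℝ => |c s - c t| * ‖H₁‖ ^ 2 * (1 + x ^ 2)⁻¹)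
        (volume.restrict (Set.Ioi 0)) :=
      (integrable_inv_one_add_sq.const_mul (|c s - c t| * ‖H₁‖ ^ 2)).restrict.congr
        (by filter_upwards with x; ring_nf)
    calc ‖∫ x in Set.Ioi (0:ℝ), _‖ ≤ ∫ x in Set.Ioi (0:ℝ),
          |c s - c t| * ‖H₁‖ ^ 2 * (1 + x ^ 2)⁻¹ :=
        norm_integral_le_of_norm_le hmaj (.of_forall hpt)
      _ = |c s - c t| * ‖H₁‖ ^ 2 * I := by
        rw [hI, ← integral_const_mul]
  -- derivative of c
  have hcder : HasDerivAt c (ε * (deriv g (η * t) * (η * 1))) t := by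
    have hd1 : HasDerivAt (fun s : ℝ => η * s) (η * 1) t := (hasDerivAt_id t).const_mul η
    have hd2 : HasDerivAt g (deriv g (η * t)) (η * t) :=
      ((hg.differentiable one_ne_zero) (η * t)).hasDerivAt
    exact (hd2.comp t hd1).const_mul ε
  set D : 𝓗 →L[ℂ] 𝓗 := G t with hD
  have hL : HasDerivAt (fun s => ((2 / Real.pi) * c s) • D)
      (((2 / Real.pi) * (ε * (deriv g (η * t) * (η * 1)))) • D) t :=
    (hcder.const_mul (2 / Real.pi)).smul_const D
  have herr : HasDerivAt (fun s => CFC.sqrt (H s) - ((2 / Real.pi) * c s) • D)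
      (0 : 𝓗 →L[ℂ] 𝓗) t := by
    have key : ∀ s, (CFC.sqrt (H s) - ((2 / Real.pi) * c s) • D)
        - (CFC.sqrt (H t) - ((2 / Real.pi) * c t) • D)
        = (2 / Real.pi) • ((c s - c t) • (G s - G t)) := by
      intro s
      rw [hsqrt s, hsqrt t]
      have e1 : F s - F t = (c s - c t) • G s := E1 s
      have e2 : (c s - c t) • (G s - G t) = (c s - c t) • G s - (c s - c t) • G t :=
        smul_sub _ _ _
      rw [e2, ← e1, hD]
      module
    rw [hasDerivAt_iff_isLittleO]
    simp only [smul_zero, sub_zero]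
    have hb1 : (fun s => c s - c t) =O[nhds t] (fun s => s - t) := hcder.isBigO_sub
    have hb2 : (fun s => (CFC.sqrt (H s) - ((2 / Real.pi) * c s) • D)
        - (CFC.sqrt (H t) - ((2 / Real.pi) * c t) • D))
        =O[nhds t] (fun s => (c s - c t) * (c s - c t)) := by
      apply Asymptotics.IsBigO.of_bound ((2 / Real.pi) * (‖H₁‖ ^ 2 * I))
      filter_upwards with s
      rw [key s]
      simp only [norm_smul, Real.norm_eq_abs, abs_mul]
      calc |2 / Real.pi| * (|c s - c t| * ‖G s - G t‖)
          ≤ |2 / Real.pi| * (|c s - c t| * (|c s - c t| * ‖H₁‖ ^ 2 * I)) := by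
            gcongr
            exact E2 s
        _ = 2 / Real.pi * (‖H₁‖ ^ 2 * I) * (|c s - c t| * |c s - c t|) := by
            rw [abs_of_nonneg (by positivity : (0:ℝ) ≤ 2 / Real.pi)]
            ring
    have hsq : (fun s => (c s - c t) * (c s - c t)) =o[nhds t] (fun s => s - t) := by
      have h1 : (fun s : ℝ => s - t) =o[nhds t] (fun _ : ℝ => (1:ℝ)) := by
        rw [Asymptotics.isLittleO_one_iff]
        have : Filter.Tendsto (fun s : ℝ => s - t) (nhds t) (nhds (t - t)) :=
          (continuous_id.sub continuous_const).tendsto t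
        simpa using this
      have h2 := (hb1.mul hb1).trans_isLittleO (h1.mul_isBigO (Asymptotics.isBigO_refl
        (fun s : ℝ => s - t) (nhds t)))
      refine h2.congr' (Filter.EventuallyEq.refl _ _) ?_
      filter_upwards with s
      ring
    exact hb2.trans_isLittleO hsq
  have hfinal := hL.add herr
  rw [add_zero] at hfinal
  have hfun : (fun s => ((2 / Real.pi) * c s) • D +
      (CFC.sqrt (H s) - ((2 / Real.pi) * c s) • D)) = fun s => CFC.sqrt (H s) := by
    funext s
    abel
  rw [← hfun]
  have hscal : (2 * ε * η * deriv g (η * t) / Real.pi) • D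
      = ((2 / Real.pi) * (ε * (deriv g (η * t) * (η * 1)))) • D := by
    congr 1
    ring
  rw [hscal]
  exact hfinal

end WithNontrivial

end HelperStmt14

/-- Let `H(t) := H₀ + ε·g(η·t)·H₁` with `H₀, H₁` self-adjoint, `ε, η > 0`, `g` a
switching function, and spectrum of `H(t)` in `[1,∞)` for every `t`.  Then for every
`t` the map `s ↦ √H(s)` is differentiable at `t` in operator norm, the integrand
`x ↦ x²·(x²·1 + H(t))⁻¹·H₁·(x²·1 + H(t))⁻¹` is Bochner integrable on `(0,∞)`, and the
derivative equals `(2·ε·η·g′(η·t)/π)` times its Bochner integral. -/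
theorem stmt_14 (H₀ H₁ : 𝓗 →L[ℂ] 𝓗) (hH₀ : IsSelfAdjoint H₀) (hH₁ : IsSelfAdjoint H₁)
    (ε η : ℝ) (hε : 0 < ε) (hη : 0 < η)
    (g : ℝ → ℝ) (hg : ContDiff ℝ 1 g) (hg0 : ∀ s ≤ (0 : ℝ), g s = 0)
    (hg' : ∀ s ∉ Set.Ioo (0 : ℝ) 1, deriv g s = 0)
    (H : ℝ → 𝓗 →L[ℂ] 𝓗) (hH : ∀ t, H t = H₀ + (ε * g (η * t)) • H₁)
    (hspec : ∀ t, spectrum ℝ (H t) ⊆ Set.Ici 1) :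
    ∀ t : ℝ,
      IntegrableOn
        (fun x : ℝ => x ^ 2 •
          (Ring.inverse (x ^ 2 • (1 : 𝓗 →L[ℂ] 𝓗) + H t) * H₁ *
            Ring.inverse (x ^ 2 • (1 : 𝓗 →L[ℂ] 𝓗) + H t))) (Set.Ioi 0) ∧
      HasDerivAt (fun s => CFC.sqrt (H s))
        ((2 * ε * η * deriv g (η * t) / Real.pi) •
          ∫ x in Set.Ioi (0 : ℝ),
            x ^ 2 • (Ring.inverse (x ^ 2 • (1 : 𝓗 →L[ℂ] 𝓗) + H t) * H₁ *
              Ring.inverse (x ^ 2 • (1 : 𝓗 →L[ℂ] 𝓗) + H t))) t := by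
  intro t
  rcases subsingleton_or_nontrivial 𝓗 with hsub | hnt
  · have hss : Subsingleton (𝓗 →L[ℂ] 𝓗) := by
      constructor
      intro a b
      ext v
      exact Subsingleton.elim _ _
    constructor
    · have heq : (fun x : ℝ => x ^ 2 •
          (Ring.inverse (x ^ 2 • (1 : 𝓗 →L[ℂ] 𝓗) + H t) * H₁ *
            Ring.inverse (x ^ 2 • (1 : 𝓗 →L[ℂ] 𝓗) + H t))) = fun _ => (0 : 𝓗 →L[ℂ] 𝓗) :=
        funext fun _ => Subsingleton.elim _ _
      rw [heq]
      exact integrable_zero _ _ _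
    · have heq : (fun s : ℝ => CFC.sqrt (H s)) = fun _ => (0 : 𝓗 →L[ℂ] 𝓗) :=
        funext fun _ => Subsingleton.elim _ _
      rw [heq]
      have h0 : ((2 * ε * η * deriv g (η * t) / Real.pi) •
          ∫ x in Set.Ioi (0 : ℝ),
            x ^ 2 • (Ring.inverse (x ^ 2 • (1 : 𝓗 →L[ℂ] 𝓗) + H t) * H₁ *
              Ring.inverse (x ^ 2 • (1 : 𝓗 →L[ℂ] 𝓗) + H t))) = 0 := Subsingleton.elim _ _
      rw [h0]
      exact hasDerivAt_const t 0
  · exact HelperStmt14.stmt_main H₀ H₁ hH₀ hH₁ ε η hε hη g hg hg0 hg' H hH hspec t
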